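/- arXiv:2103.11069 — 2 statements merged into one kernel-verified Lean document; each statement's English description precedes it below -/
import Mathlib

section
/- If f : [a,b] → ℝ is absolutely continuous, then the total variation of f over [a,b] equals the integral of |f'(x)| over [a,b]. -/
open Set MeasureTheory

/-- `f` is absolutely continuous on `[a,b]`: for every `ε > 0` there is `δ > 0` such that
for any finite collection of subintervals of `[a,b]` with pairwise disjoint interiors and
total length less than `δ`, the sum of `|f(vᵢ) - f(uᵢ)|` is less than `ε`. -/
def AbsolutelyContinuousOnInterval' (f : ℝ → ℝ) (a b : ℝ) : Prop :=
  ∀ ε > (0:ℝ), ∃ δ > (0:ℝ), ∀ (n : ℕ) (u v : Fin n → ℝ),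
    (∀ i, a ≤ u i ∧ u i ≤ v i ∧ v i ≤ b) →
    (Pairwise fun i j => Disjoint (Set.Ioo (u i) (v i)) (Set.Ioo (u j) (v j))) →
    (∑ i, (v i - u i)) < δ →
    (∑ i, |f (v i) - f (u i)|) < ε

namespace ACproof

/-- disjointness of intervals from a monotone enumeration -/
lemma disjoint_of_monotone {u : ℕ → ℝ} (hu : Monotone u) :
    Pairwise fun i j : Fin n => Disjoint (Set.Ioo (u i.1) (u (i.1+1))) (Set.Ioo (u j.1) (u (j.1+1))) := by
  intro i j hij
  rcases lt_or_gt_of_ne (fun h : i.1 = j.1 => hij (Fin.ext h)) with h | h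
  · rw [Set.Ioo_disjoint_Ioo]
    exact le_max_of_le_right (min_le_of_left_le (hu h))
  · rw [Set.Ioo_disjoint_Ioo]
    exact le_max_of_le_left (min_le_of_right_le (hu h))

/-- Applying absolute continuity to a monotone partition contained in a small interval. -/
lemma sum_lt_of_partition {f : ℝ → ℝ} {a b : ℝ}
    (hf : AbsolutelyContinuousOnInterval' f a b) {ε δ : ℝ}
    (hδ : ∀ (n : ℕ) (u v : Fin n → ℝ),
      (∀ i, a ≤ u i ∧ u i ≤ v i ∧ v i ≤ b) →
      (Pairwise fun i j => Disjoint (Set.Ioo (u i) (v i)) (Set.Ioo (u j) (v j))) →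
      (∑ i, (v i - u i)) < δ →
      (∑ i, |f (v i) - f (u i)|) < ε)
    {c d : ℝ} (hac : a ≤ c) (hdb : d ≤ b) (hcd : d - c < δ)
    (n : ℕ) (u : ℕ → ℝ) (hu : Monotone u) (hmem : ∀ i, u i ∈ Icc c d) :
    ∑ i ∈ Finset.range n, |f (u (i+1)) - f (u i)| < ε := by
  have h1 : ∑ i ∈ Finset.range n, |f (u (i+1)) - f (u i)|
      = ∑ i : Fin n, |f (u (i.1+1)) - f (u i.1)| := (Fin.sum_univ_eq_sum_range _ n).symm
  rw [h1]
  apply hδ n (fun i => u i.1) (fun i => u (i.1+1))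
  · intro i
    exact ⟨hac.trans (hmem i.1).1, hu (Nat.le_succ _), (hmem (i.1+1)).2.trans hdb⟩
  · exact disjoint_of_monotone hu
  · have : ∑ i : Fin n, (u (i.1+1) - u i.1) = u n - u 0 := by
      rw [Fin.sum_univ_eq_sum_range (fun i => u (i+1) - u i) n]
      exact Finset.sum_range_sub u n
    rw [this]
    have := (hmem n).2
    have := (hmem 0).1
    linarith

lemma edist_sum_eq (f : ℝ → ℝ) (n : ℕ) (u : ℕ → ℝ) :
    ∑ i ∈ Finset.range n, edist (f (u (i+1))) (f (u i))
      = ENNReal.ofReal (∑ i ∈ Finset.range n, |f (u (i+1)) - f (u i)|) := by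
  rw [ENNReal.ofReal_sum_of_nonneg (fun i _ => abs_nonneg _)]
  refine Finset.sum_congr rfl fun i _ => ?_
  rw [edist_dist, Real.dist_eq]

/-- small intervals have small variation -/
lemma evar_small {f : ℝ → ℝ} {a b : ℝ}
    (hf : AbsolutelyContinuousOnInterval' f a b) {ε δ : ℝ}
    (hδ : ∀ (n : ℕ) (u v : Fin n → ℝ),
      (∀ i, a ≤ u i ∧ u i ≤ v i ∧ v i ≤ b) →
      (Pairwise fun i j => Disjoint (Set.Ioo (u i) (v i)) (Set.Ioo (u j) (v j))) →
      (∑ i, (v i - u i)) < δ →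
      (∑ i, |f (v i) - f (u i)|) < ε)
    {c d : ℝ} (hac : a ≤ c) (hdb : d ≤ b) (hcd : d - c < δ) :
    eVariationOn f (Icc c d) ≤ ENNReal.ofReal ε := by
  apply iSup_le
  rintro ⟨n, u, hu, hmem⟩
  rw [edist_sum_eq]
  exact ENNReal.ofReal_le_ofReal
    (sum_lt_of_partition hf hδ hac hdb hcd n u hu hmem).le

/-- absolute continuity implies bounded variation -/
lemma bv {f : ℝ → ℝ} {a b : ℝ} (hab : a ≤ b)
    (hf : AbsolutelyContinuousOnInterval' f a b) :
    BoundedVariationOn f (Icc a b) := by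
  obtain ⟨δ, hδ0, hδ⟩ := hf 1 one_pos
  have key : ∀ n : ℕ, ∀ c, a ≤ c → c ≤ b → b - c ≤ n * (δ/2) →
      eVariationOn f (Icc c b) ≤ n * ENNReal.ofReal 1 := by
    intro n
    induction n with
    | zero =>
      intro c hac hcb h
      have : c = b := le_antisymm hcb (by simpa using h)
      subst this
      rw [Icc_self]
      simp [eVariationOn.subsingleton f (Set.subsingleton_singleton)]
    | succ n ih =>
      intro c hac hcb h
      set m := min b (c + δ/2) with hm
      have hcm : c ≤ m := le_min hcb (by linarith)
      have hmb : m ≤ b := min_le_left _ _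
      have step1 : eVariationOn f (Icc c m) ≤ ENNReal.ofReal 1 := by
        apply evar_small hf hδ hac hmb
        have : m ≤ c + δ/2 := min_le_right _ _
        linarith
      have step2 : eVariationOn f (Icc m b) ≤ n * ENNReal.ofReal 1 := by
        apply ih m (hac.trans hcm) hmb
        rcases le_or_gt (c + δ/2) b with h' | h'
        · have : m = c + δ/2 := min_eq_right h'
          rw [this]; push_cast at h ⊢; linarith
        · have : m = b := min_eq_left h'.le
          rw [this]; simp; positivity
      have hsplit := eVariationOn.Icc_add_Icc f hcm hmb (s := Icc c b)
        ⟨hcm, hmb⟩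
      rw [Set.Icc_inter_Icc, Set.Icc_inter_Icc] at hsplit
      have e1 : max c c = c := max_self c
      have e2 : min b m = m := min_eq_right hmb
      have e3 : max c m = m := max_eq_right hcm
      have e4 : min b b = b := min_self b
      rw [e1, e2, e3, e4] at hsplit
      calc eVariationOn f (Icc c b) = eVariationOn f (Icc c m) + eVariationOn f (Icc m b) := by
            rw [hsplit]
            congr 1
            rw [Set.Icc_inter_Icc, max_self, min_self]
          _ ≤ ENNReal.ofReal 1 + n * ENNReal.ofReal 1 := add_le_add step1 step2
          _ = (n+1) * ENNReal.ofReal 1 := by ring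
          _ = ((n:ℕ)+1 : ℕ) * ENNReal.ofReal 1 := by push_cast; ring
  obtain ⟨n, hn⟩ := exists_nat_ge ((b - a) / (δ/2))
  have hba : b - a ≤ n * (δ/2) := by
    rw [div_le_iff₀ (by linarith)] at hn; linarith
  have := key n a le_rfl hab hba
  intro htop
  rw [htop] at this
  simp only [ENNReal.ofReal_one, mul_one] at this
  exact (lt_irrefl (⊤:ENNReal) (lt_of_le_of_lt this (ENNReal.natCast_lt_top n))).elim

end ACproof

namespace ACproof

lemma exists_partition {f : ℝ → ℝ} {x y : ℝ}
    (hfin : eVariationOn f (Icc x y) ≠ ⊤) (hxy : x ≤ y) {ε : ℝ} (hε : 0 < ε) :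
    ∃ (n : ℕ) (u : ℕ → ℝ), Monotone u ∧ (∀ i, u i ∈ Icc x y) ∧
      (eVariationOn f (Icc x y)).toReal
        < ∑ i ∈ Finset.range n, |f (u (i+1)) - f (u i)| + ε := by
  by_cases h0 : eVariationOn f (Icc x y) = 0
  · exact ⟨0, fun _ => x, monotone_const, fun _ => ⟨le_rfl, hxy⟩, by simp [h0, hε]⟩
  · have hlt : eVariationOn f (Icc x y) - ENNReal.ofReal (ε/2) < eVariationOn f (Icc x y) :=
      ENNReal.sub_lt_self hfin h0 (ENNReal.ofReal_pos.2 (half_pos hε)).ne'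
    obtain ⟨⟨n, u, hu, hus⟩, hp⟩ := lt_iSup_iff.mp
      (show _ < ⨆ p : ℕ × {u : ℕ → ℝ // Monotone u ∧ ∀ i, u i ∈ Icc x y},
        ∑ i ∈ Finset.range p.1, edist (f (p.2.1 (i+1))) (f (p.2.1 i)) from hlt)
    refine ⟨n, u, hu, hus, ?_⟩
    rw [edist_sum_eq] at hp
    have h2 : eVariationOn f (Icc x y)
        ≤ ENNReal.ofReal (∑ i ∈ Finset.range n, |f (u (i+1)) - f (u i)| + ε/2) := by
      rw [ENNReal.ofReal_add (Finset.sum_nonneg fun i _ => abs_nonneg _) (half_pos hε).le]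
      exact tsub_le_iff_right.mp hp.le
    have := ENNReal.toReal_le_of_le_ofReal
      (by positivity) h2
    linarith

variable {f : ℝ → ℝ} {a b : ℝ}

/-- the variation function -/
noncomputable def vv (f : ℝ → ℝ) (a b : ℝ) : ℝ → ℝ :=
  fun x => variationOnFromTo f (Icc a b) a x

lemma lbv (hab : a ≤ b) (hf : AbsolutelyContinuousOnInterval' f a b) :
    LocallyBoundedVariationOn f (Icc a b) :=
  fun _ _ _ _ => (bv hab hf).mono inter_subset_left

lemma inter_Icc_eq {x y : ℝ} (hx : x ∈ Icc a b) (hy : y ∈ Icc a b) :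
    Icc a b ∩ Icc x y = Icc x y := by
  rw [Set.Icc_inter_Icc, max_eq_right hx.1, min_eq_right hy.2]

lemma v_diff (hab : a ≤ b) (hf : AbsolutelyContinuousOnInterval' f a b)
    {x y : ℝ} (hx : x ∈ Icc a b) (hy : y ∈ Icc a b) (hxy : x ≤ y) :
    vv f a b y - vv f a b x = (eVariationOn f (Icc x y)).toReal := by
  have ha : a ∈ Icc a b := ⟨le_rfl, hab⟩
  have := variationOnFromTo.add (lbv hab hf) ha hx hy
  have h2 : variationOnFromTo f (Icc a b) x y = (eVariationOn f (Icc x y)).toReal := by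
    rw [variationOnFromTo.eq_of_le f _ hxy, inter_Icc_eq hx hy]
  simp only [vv]
  linarith [this, h2]

lemma v_diff_nonneg (hab : a ≤ b) (hf : AbsolutelyContinuousOnInterval' f a b)
    {x y : ℝ} (hx : x ∈ Icc a b) (hy : y ∈ Icc a b) (hxy : x ≤ y) :
    0 ≤ vv f a b y - vv f a b x := by
  rw [v_diff hab hf hx hy hxy]; exact ENNReal.toReal_nonneg

lemma disjoint_of_monotone' {u : ℕ → ℝ} (hu : Monotone u) {i j : ℕ} (hij : i ≠ j) :
    Disjoint (Set.Ioo (u i) (u (i+1))) (Set.Ioo (u j) (u (j+1))) := by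
  rcases lt_or_gt_of_ne hij with h | h
  · rw [Set.Ioo_disjoint_Ioo]
    exact le_max_of_le_right (min_le_of_left_le (hu h))
  · rw [Set.Ioo_disjoint_Ioo]
    exact le_max_of_le_left (min_le_of_right_le (hu h))

lemma sigma_disjoint {n : ℕ} {N : Fin n → ℕ} {U : Fin n → ℕ → ℝ} {u w : Fin n → ℝ}
    (hUmono : ∀ i, Monotone (U i))
    (hsub : ∀ (i : Fin n) (j : ℕ), Ioo (U i j) (U i (j+1)) ⊆ Ioo (u i) (w i))
    (hdisj : Pairwise fun i j => Disjoint (Ioo (u i) (w i)) (Ioo (u j) (w j))) :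
    Pairwise fun p q : Σ i : Fin n, Fin (N i) =>
      Disjoint (Ioo (U p.1 p.2) (U p.1 (p.2+1))) (Ioo (U q.1 q.2) (U q.1 (q.2+1))) := by
  rintro ⟨i, j⟩ ⟨i', j'⟩ hne
  by_cases hii : i = i'
  · subst hii
    have hj : (j : ℕ) ≠ (j' : ℕ) := by
      intro h
      exact hne (congrArg (Sigma.mk i) (Fin.val_injective h))
    exact disjoint_of_monotone' (hUmono i) hj
  · exact (hdisj hii).mono (hsub _ _) (hsub _ _)

lemma AC_v (hab : a ≤ b) (hf : AbsolutelyContinuousOnInterval' f a b) :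
    AbsolutelyContinuousOnInterval' (vv f a b) a b := by
  intro ε hε
  obtain ⟨δ, hδ0, hδ⟩ := hf (ε/2) (half_pos hε)
  refine ⟨δ, hδ0, ?_⟩
  intro n u w hmem hdisj hlen
  have hfin : ∀ i : Fin n, eVariationOn f (Icc (u i) (w i)) ≠ ⊤ := by
    intro i
    refine ne_top_of_le_ne_top (bv hab hf) (eVariationOn.mono f ?_)
    exact Icc_subset_Icc (hmem i).1 (hmem i).2.2
  set ε' : ℝ := ε/(2*(n+1)) with hε'
  have hε'0 : 0 < ε' := by positivity
  choose N U hUmono hUmem hUsum using fun i : Fin n =>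
    exists_partition (hfin i) (hmem i).2.1 hε'0
  set σ := Σ i : Fin n, Fin (N i) with hσ
  let e : σ ≃ Fin (Fintype.card σ) := Fintype.equivFin σ
  set uu : Fin (Fintype.card σ) → ℝ := fun k => U (e.symm k).1 (e.symm k).2 with huu
  set ww : Fin (Fintype.card σ) → ℝ := fun k => U (e.symm k).1 ((e.symm k).2 + 1) with hww
  have hsub : ∀ (i : Fin n) (j : ℕ), Ioo (U i j) (U i (j+1)) ⊆ Ioo (u i) (w i) :=
    fun i j => Set.Ioo_subset_Ioo (hUmem i j).1 (hUmem i (j+1)).2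
  have big : ∑ k, |f (ww k) - f (uu k)| < ε/2 := by
    apply hδ
    · intro k
      exact ⟨(hmem _).1.trans (hUmem _ _).1, hUmono _ (Nat.le_succ _),
        (hUmem _ _).2.trans (hmem _).2.2⟩
    · intro k k' hkk'
      simp only [huu, hww]
      exact sigma_disjoint hUmono hsub hdisj (fun h => hkk' (e.symm.injective h))
    · calc ∑ k, (ww k - uu k)
          = ∑ p : σ, (U p.1 ((p.2 : ℕ)+1) - U p.1 p.2) :=
            Equiv.sum_comp e.symm (fun p : σ => U p.1 ((p.2 : ℕ)+1) - U p.1 p.2)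
        _ = ∑ i, ∑ j : Fin (N i), (U i ((j : ℕ)+1) - U i j) := by
            rw [← Finset.univ_sigma_univ, Finset.sum_sigma]
        _ ≤ ∑ i, (w i - u i) := by
            apply Finset.sum_le_sum
            intro i _
            rw [Fin.sum_univ_eq_sum_range (fun j => U i (j+1) - U i j) (N i),
              Finset.sum_range_sub (U i) (N i)]
            linarith [(hUmem i (N i)).2, (hUmem i 0).1]
        _ < δ := hlen
  have sum_eq : ∑ i, ∑ j ∈ Finset.range (N i), |f (U i (j+1)) - f (U i j)|
      = ∑ k, |f (ww k) - f (uu k)| := by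
    calc ∑ i, ∑ j ∈ Finset.range (N i), |f (U i (j+1)) - f (U i j)|
        = ∑ i, ∑ j : Fin (N i), |f (U i ((j:ℕ)+1)) - f (U i j)| := by
          refine Finset.sum_congr rfl fun i _ => ?_
          rw [Fin.sum_univ_eq_sum_range (fun j => |f (U i (j+1)) - f (U i j)|) (N i)]
      _ = ∑ p : σ, |f (U p.1 ((p.2:ℕ)+1)) - f (U p.1 p.2)| := by
          rw [← Finset.univ_sigma_univ, Finset.sum_sigma]
      _ = ∑ k, |f (ww k) - f (uu k)| :=
          (Equiv.sum_comp e.symm (fun p : σ => |f (U p.1 ((p.2:ℕ)+1)) - f (U p.1 p.2)|)).symm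
  have per_i : ∀ i : Fin n, |vv f a b (w i) - vv f a b (u i)|
      ≤ (∑ j ∈ Finset.range (N i), |f (U i (j+1)) - f (U i j)|) + ε' := by
    intro i
    have humem : u i ∈ Icc a b := ⟨(hmem i).1, (hmem i).2.1.trans (hmem i).2.2⟩
    have hwmem : w i ∈ Icc a b := ⟨(hmem i).1.trans (hmem i).2.1, (hmem i).2.2⟩
    rw [abs_of_nonneg (v_diff_nonneg hab hf humem hwmem (hmem i).2.1),
      v_diff hab hf humem hwmem (hmem i).2.1]
    exact (hUsum i).le
  have hne : (0:ℝ) < 2*(n+1) := by positivity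
  calc ∑ i, |vv f a b (w i) - vv f a b (u i)|
      ≤ ∑ i, ((∑ j ∈ Finset.range (N i), |f (U i (j+1)) - f (U i j)|) + ε') :=
        Finset.sum_le_sum fun i _ => per_i i
    _ = (∑ i, ∑ j ∈ Finset.range (N i), |f (U i (j+1)) - f (U i j)|) + n * ε' := by
        rw [Finset.sum_add_distrib, Finset.sum_const, Finset.card_univ, Fintype.card_fin,
          nsmul_eq_mul]
    _ < ε/2 + ε/2 := by
        apply add_lt_add_of_lt_of_le
        · rw [sum_eq]; exact big
        · rw [hε']
          rw [mul_div_assoc']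
          rw [div_le_div_iff₀ hne two_pos]
          nlinarith [hε.le]
    _ = ε := add_halves ε

end ACproof

namespace ACproof

variable {f g g1 g2 : ℝ → ℝ} {a b : ℝ}

/-- clamp to [a,b] -/
noncomputable def cl (a b : ℝ) : ℝ → ℝ := fun x => max a (min x b)

lemma cl_mem (hab : a ≤ b) (x : ℝ) : cl a b x ∈ Icc a b :=
  ⟨le_max_left _ _, max_le hab (min_le_right _ _)⟩

lemma cl_mono : Monotone (cl a b) :=
  fun _ _ h => max_le_max le_rfl (min_le_min (by exact h) le_rfl)

lemma cl_eq {x : ℝ} (hx : x ∈ Icc a b) : cl a b x = x := by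
  simp only [cl, min_eq_left hx.2, max_eq_right hx.1]

lemma cl_lip (x y : ℝ) : |cl a b x - cl a b y| ≤ |x - y| := by
  simp only [cl]
  have step1 : |max a (min x b) - max a (min y b)| ≤ |min x b - min y b| := by
    rw [max_comm a, max_comm a]
    exact abs_max_sub_max_le_abs _ _ _
  have e1 : min x b - min y b = -(max (-x) (-b) - max (-y) (-b)) := by
    rw [max_neg_neg, max_neg_neg]; ring
  have step2 : |min x b - min y b| ≤ |x - y| := by
    rw [e1, abs_neg]
    calc |max (-x) (-b) - max (-y) (-b)| ≤ |(-x) - (-y)| := abs_max_sub_max_le_abs _ _ _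
      _ = |x - y| := by rw [neg_sub_neg, abs_sub_comm]
  exact step1.trans step2

lemma cl_Ioo (u w : ℝ) : Ioo (cl a b u) (cl a b w) ⊆ Ioo u w := by
  intro t ht
  obtain ⟨h1, h2⟩ := ht
  rw [cl, max_lt_iff] at h1
  rw [cl, lt_max_iff] at h2
  rcases h2 with h2 | h2
  · exact absurd h2 (not_lt.2 h1.1.le)
  · rw [lt_min_iff] at h2
    rw [min_lt_iff] at h1
    rcases h1.2 with h3 | h3
    · exact ⟨h3, h2.1⟩
    · exact absurd h2.2 (not_lt.2 h3.le)

/-- global absolute continuity on ℝ -/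
def ACglobal (g : ℝ → ℝ) : Prop :=
  ∀ ε > (0:ℝ), ∃ δ > (0:ℝ), ∀ (n : ℕ) (u v : Fin n → ℝ),
    (∀ i, u i ≤ v i) →
    (Pairwise fun i j => Disjoint (Set.Ioo (u i) (v i)) (Set.Ioo (u j) (v j))) →
    (∑ i, (v i - u i)) < δ →
    (∑ i, |g (v i) - g (u i)|) < ε

lemma ACglobal_of_AC (hab : a ≤ b) (hg : AbsolutelyContinuousOnInterval' g a b) :
    ACglobal (fun x => g (cl a b x)) := by
  intro ε hε
  obtain ⟨δ, hδ0, hδ⟩ := hg ε hε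
  refine ⟨δ, hδ0, ?_⟩
  intro n u w hle hdisj hlen
  apply hδ n (fun i => cl a b (u i)) (fun i => cl a b (w i))
  · intro i
    exact ⟨(cl_mem hab _).1, cl_mono (hle i), (cl_mem hab _).2⟩
  · exact fun i j hij => (hdisj hij).mono (cl_Ioo _ _) (cl_Ioo _ _)
  · refine lt_of_le_of_lt (Finset.sum_le_sum fun i _ => ?_) hlen
    have h1 := cl_lip (a := a) (b := b) (w i) (u i)
    have h2 : cl a b (u i) ≤ cl a b (w i) := cl_mono (hle i)
    rw [abs_of_nonneg (sub_nonneg.2 h2)] at h1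
    calc cl a b (w i) - cl a b (u i) ≤ |w i - u i| := h1
      _ = w i - u i := abs_of_nonneg (sub_nonneg.2 (hle i))

lemma continuous_clamp (hab : a ≤ b) (hg : AbsolutelyContinuousOnInterval' g a b) :
    Continuous (fun x => g (cl a b x)) := by
  rw [Metric.continuous_iff]
  intro x ε hε
  obtain ⟨δ, hδ0, hδ⟩ := hg ε hε
  refine ⟨δ, hδ0, fun y hy => ?_⟩
  set p := min (cl a b x) (cl a b y) with hp
  set q := max (cl a b x) (cl a b y) with hq
  have key : |g q - g p| < ε := by
    have h := hδ 1 (fun _ => p) (fun _ => q)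
      (fun i => ⟨le_min (cl_mem hab x).1 (cl_mem hab y).1, min_le_max,
        max_le (cl_mem hab x).2 (cl_mem hab y).2⟩)
      (fun i j hij => absurd (Subsingleton.elim i j) hij)
      (by
        rw [Fin.sum_univ_one]
        have heq : q - p = |cl a b y - cl a b x| := by
          rcases le_total (cl a b x) (cl a b y) with h | h
          · rw [hp, hq, min_eq_left h, max_eq_right h, abs_of_nonneg (sub_nonneg.2 h)]
          · rw [hp, hq, min_eq_right h, max_eq_left h, abs_of_nonpos (sub_nonpos.2 h), neg_sub]
        rw [heq]
        calc |cl a b y - cl a b x| ≤ |y - x| := cl_lip _ _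
          _ < δ := by rwa [← Real.dist_eq])
    simpa using h
  rw [Real.dist_eq]
  rcases le_total (cl a b x) (cl a b y) with h | h
  · rwa [hp, hq, min_eq_left h, max_eq_right h] at key
  · rw [hp, hq, min_eq_right h, max_eq_left h] at key
    rwa [abs_sub_comm]

lemma monotone_clamp (hab : a ≤ b) (hg : MonotoneOn g (Icc a b)) :
    Monotone (fun x => g (cl a b x)) :=
  fun _ _ h => hg (cl_mem hab _) (cl_mem hab _) (cl_mono h)

lemma AC_sub (h1 : AbsolutelyContinuousOnInterval' g1 a b)
    (h2 : AbsolutelyContinuousOnInterval' g2 a b) :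
    AbsolutelyContinuousOnInterval' (fun x => g1 x - g2 x) a b := by
  intro ε hε
  obtain ⟨δ1, hδ10, hδ1⟩ := h1 (ε/2) (half_pos hε)
  obtain ⟨δ2, hδ20, hδ2⟩ := h2 (ε/2) (half_pos hε)
  refine ⟨min δ1 δ2, lt_min hδ10 hδ20, fun n u w hmem hdisj hlen => ?_⟩
  calc ∑ i, |g1 (w i) - g2 (w i) - (g1 (u i) - g2 (u i))|
      ≤ ∑ i, (|g1 (w i) - g1 (u i)| + |g2 (w i) - g2 (u i)|) := by
        refine Finset.sum_le_sum fun i _ => ?_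
        have : g1 (w i) - g2 (w i) - (g1 (u i) - g2 (u i))
            = (g1 (w i) - g1 (u i)) - (g2 (w i) - g2 (u i)) := by ring
        rw [this]
        exact abs_sub _ _
    _ = (∑ i, |g1 (w i) - g1 (u i)|) + ∑ i, |g2 (w i) - g2 (u i)| :=
        Finset.sum_add_distrib
    _ < ε/2 + ε/2 :=
        add_lt_add (hδ1 n u w hmem hdisj (hlen.trans_le (min_le_left _ _)))
          (hδ2 n u w hmem hdisj (hlen.trans_le (min_le_right _ _)))
    _ = ε := add_halves ε

lemma f_dist_le (hab : a ≤ b) (hf : AbsolutelyContinuousOnInterval' f a b)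
    {x y : ℝ} (hx : x ∈ Icc a b) (hy : y ∈ Icc a b) (hxy : x ≤ y) :
    |f y - f x| ≤ vv f a b y - vv f a b x := by
  rw [v_diff hab hf hx hy hxy]
  have hfin : eVariationOn f (Icc x y) ≠ ⊤ :=
    ne_top_of_le_ne_top (bv hab hf) (eVariationOn.mono f (Icc_subset_Icc hx.1 hy.2))
  have h1 : edist (f y) (f x) ≤ eVariationOn f (Icc x y) :=
    eVariationOn.edist_le f ⟨hxy, le_rfl⟩ ⟨le_rfl, hxy⟩
  have := ENNReal.toReal_mono hfin h1
  rwa [edist_dist, ENNReal.toReal_ofReal dist_nonneg, Real.dist_eq] at this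

lemma v_monotoneOn (hab : a ≤ b) (hf : AbsolutelyContinuousOnInterval' f a b) :
    MonotoneOn (vv f a b) (Icc a b) :=
  variationOnFromTo.monotoneOn (lbv hab hf) ⟨le_rfl, hab⟩

lemma v_sub_f_monotoneOn (hab : a ≤ b) (hf : AbsolutelyContinuousOnInterval' f a b) :
    MonotoneOn (fun x => vv f a b x - f x) (Icc a b) := by
  intro x hx y hy hxy
  have := f_dist_le hab hf hx hy hxy
  have h2 := abs_le.1 this
  simp only
  linarith [h2.1]

lemma v_add_f_monotoneOn (hab : a ≤ b) (hf : AbsolutelyContinuousOnInterval' f a b) :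
    MonotoneOn (fun x => vv f a b x + f x) (Icc a b) := by
  intro x hx y hy hxy
  have := f_dist_le hab hf hx hy hxy
  have h2 := abs_le.1 this
  simp only
  linarith [h2.2]

end ACproof

namespace ACproof

/-- An open preconnected subset of ℝ with finite measure is an open interval. -/
lemma open_preconnected_eq_Ioo {D : Set ℝ} (hD : IsOpen D) (hpc : IsPreconnected D)
    (hne : D.Nonempty) (hvol : volume D ≠ ⊤) :
    D = Ioo (sInf D) (sSup D) ∧ sInf D ≤ sSup D := by
  have hend : ∀ z ∈ D, (z ∈ lowerBounds D ∨ z ∈ upperBounds D) → False := by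
    intro z hz hbd
    obtain ⟨ε, hε0, hball⟩ := Metric.isOpen_iff.1 hD z hz
    rcases hbd with hbd | hbd
    · have hm : z - ε/2 ∈ D := hball (by simp [Real.dist_eq, abs_of_nonneg hε0.le]; linarith)
      linarith [hbd hm]
    · have hm : z + ε/2 ∈ D := hball (by simp [Real.dist_eq, abs_of_nonneg hε0.le]; linarith)
      linarith [hbd hm]
  have h := hpc.mem_intervals
  simp only [Set.mem_insert_iff, Set.mem_singleton_iff] at h
  obtain ⟨P, hP⟩ : ∃ P, P = sInf D := ⟨_, rfl⟩
  obtain ⟨Q, hQ⟩ : ∃ Q, Q = sSup D := ⟨_, rfl⟩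
  rw [← hP, ← hQ] at h
  rw [← hP, ← hQ]
  rcases h with h | h | h | h | h | h | h | h | h | h
  · exfalso
    have hle : P ≤ Q := by
      by_contra hc
      rw [h] at hne
      exact hne.ne_empty (Set.Icc_eq_empty hc)
    have hmem : P ∈ D := by rw [h]; exact ⟨le_rfl, hle⟩
    exact hend _ hmem (Or.inl fun y hy => by rw [h] at hy; exact hy.1)
  · exfalso
    have hlt : P < Q := by
      by_contra hc
      rw [h] at hne
      exact hne.ne_empty (Set.Ico_eq_empty (by push_neg at hc; exact not_lt.2 hc))
    have hmem : P ∈ D := by rw [h]; exact ⟨le_rfl, hlt⟩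
    exact hend _ hmem (Or.inl fun y hy => by rw [h] at hy; exact hy.1)
  · exfalso
    have hlt : P < Q := by
      by_contra hc
      rw [h] at hne
      exact hne.ne_empty (Set.Ioc_eq_empty (by push_neg at hc; exact not_lt.2 hc))
    have hmem : Q ∈ D := by rw [h]; exact ⟨hlt, le_rfl⟩
    exact hend _ hmem (Or.inr fun y hy => by rw [h] at hy; exact hy.2)
  · refine ⟨h, ?_⟩
    by_contra hc
    rw [h] at hne
    exact hne.ne_empty (Set.Ioo_eq_empty (by push_neg at hc; exact not_lt.2 hc.le))
  · exact absurd (h ▸ hvol) (by simp [Real.volume_Ici])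
  · exact absurd (h ▸ hvol) (by simp [Real.volume_Ioi])
  · exact absurd (h ▸ hvol) (by simp [Real.volume_Iic])
  · exact absurd (h ▸ hvol) (by simp [Real.volume_Iio])
  · exact absurd (h ▸ hvol) (by simp [Real.volume_univ])
  · exact absurd (h ▸ hne) (by simp)

variable {G : ℝ → ℝ}

/-- Stieltjes function of a monotone continuous function -/
noncomputable def SG (hmono : Monotone G) (hcont : Continuous G) : StieltjesFunction ℝ :=
  ⟨G, hmono, fun _ => hcont.continuousWithinAt⟩

lemma SG_measure_Ioo (hmono : Monotone G) (hcont : Continuous G) (p q : ℝ) :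
    (SG hmono hcont).measure (Ioo p q) = ENNReal.ofReal (G q - G p) := by
  rw [StieltjesFunction.measure_Ioo]
  congr 1
  have : Function.leftLim (SG hmono hcont) q = G q :=
    leftLim_eq_of_tendsto
      ((hcont.tendsto q).mono_left nhdsWithin_le_nhds)
  rw [this]
  rfl

/-- A monotone continuous globally absolutely continuous function has Stieltjes measure
absolutely continuous w.r.t. Lebesgue. -/
lemma SG_abs_cont (hmono : Monotone G) (hcont : Continuous G) (hAC : ACglobal G) :
    (SG hmono hcont).measure ≪ (volume : Measure ℝ) := by
  classical
  set μ := (SG hmono hcont).measure with hμ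
  refine Measure.AbsolutelyContinuous.mk (fun E hE hE0 => ?_)
  have main : ∀ ε : ℝ, 0 < ε → μ E ≤ ENNReal.ofReal ε := by
    intro ε hε
    obtain ⟨δ, hδ0, hδ⟩ := hAC ε hε
    obtain ⟨U, hEU, hUopen, hUvol⟩ :=
      Set.exists_isOpen_lt_of_lt E (ENNReal.ofReal δ) (by rw [hE0]; exact ENNReal.ofReal_pos.2 hδ0)
    refine le_trans (measure_mono hEU) ?_
    -- key compact estimate
    have hK : ∀ K : Set ℝ, IsCompact K → K ⊆ U → μ K ≤ ENNReal.ofReal ε := by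
      intro K hKcomp hKU
      -- cover by connected components
      have hcover : K ⊆ ⋃ x ∈ K, connectedComponentIn U x := fun x hx =>
        Set.mem_biUnion hx (mem_connectedComponentIn (hKU hx))
      obtain ⟨t, htK, htfin, htcover⟩ := hKcomp.elim_finite_subcover_image
        (fun x _ => hUopen.connectedComponentIn) hcover
      -- the distinct components, as a finset of sets
      set F : Finset (Set ℝ) := htfin.toFinset.image (fun x => connectedComponentIn U x) with hF
      have hFopen : ∀ D ∈ F, IsOpen D := by
        intro D hD
        simp only [hF, Finset.mem_image] at hD
        obtain ⟨x, _, rfl⟩ := hD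
        exact hUopen.connectedComponentIn
      have hFsub : ∀ D ∈ F, D ⊆ U := by
        intro D hD
        simp only [hF, Finset.mem_image] at hD
        obtain ⟨x, _, rfl⟩ := hD
        exact connectedComponentIn_subset _ _
      have hFIoo : ∀ D ∈ F, D = Ioo (sInf D) (sSup D) ∧ sInf D ≤ sSup D := by
        intro D hD
        simp only [hF, Finset.mem_image, Set.Finite.mem_toFinset] at hD
        obtain ⟨x, hx, rfl⟩ := hD
        refine open_preconnected_eq_Ioo hUopen.connectedComponentIn
          isPreconnected_connectedComponentIn
          ⟨x, mem_connectedComponentIn (hKU (htK hx))⟩ ?_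
        exact ne_top_of_le_ne_top (hUvol.trans ENNReal.ofReal_lt_top).ne
          (measure_mono (connectedComponentIn_subset _ _))
      have hFdisj : (F : Set (Set ℝ)).Pairwise (Function.onFun Disjoint id) := by
        intro D hD D' hD' hne
        simp only [hF, Finset.coe_image, Set.mem_image, Set.Finite.coe_toFinset] at hD hD'
        obtain ⟨x, _, rfl⟩ := hD
        obtain ⟨x', _, rfl⟩ := hD'
        rw [Function.onFun, Set.disjoint_left]
        intro z hz hz'
        exact hne ((connectedComponentIn_eq hz).trans (connectedComponentIn_eq hz').symm)
      -- sum of lengths is small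
      have htcover2 : K ⊆ ⋃ D ∈ F, D := by
        intro z hz
        rcases Set.mem_iUnion₂.1 (htcover hz) with ⟨x, hxt, hzx⟩
        refine Set.mem_biUnion ?_ hzx
        exact Finset.mem_image_of_mem _ ((Set.Finite.mem_toFinset htfin).2 hxt)
      have hlensum : ∑ D ∈ F, (sSup D - sInf D) < δ := by
        have h0 := measure_biUnion_finset (μ := volume) hFdisj
          (fun D hD => (hFopen D hD).measurableSet)
        simp only [id_eq] at h0
        have h1 : ∑ D ∈ F, volume D ≤ volume U := by
          rw [← h0]
          exact measure_mono (Set.iUnion₂_subset hFsub)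
        have h2 : ∑ D ∈ F, volume D = ENNReal.ofReal (∑ D ∈ F, (sSup D - sInf D)) := by
          rw [ENNReal.ofReal_sum_of_nonneg (fun D hD => sub_nonneg.2 (hFIoo D hD).2)]
          refine Finset.sum_congr rfl fun D hD => ?_
          conv_lhs => rw [(hFIoo D hD).1]
          rw [Real.volume_Ioo]
        rw [h2] at h1
        have := h1.trans_lt hUvol
        rwa [ENNReal.ofReal_lt_ofReal_iff hδ0] at this
      -- apply global absolute continuity
      have hGsum : ∑ D ∈ F, (G (sSup D) - G (sInf D)) < ε := by
        have habs : ∑ D ∈ F, (G (sSup D) - G (sInf D))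
            = ∑ D ∈ F, |G (sSup D) - G (sInf D)| := by
          refine Finset.sum_congr rfl fun D hD => ?_
          rw [abs_of_nonneg (sub_nonneg.2 (hmono (hFIoo D hD).2))]
        rw [habs]
        set e := F.equivFin with he
        have hsum1 : ∑ D ∈ F, |G (sSup D) - G (sInf D)|
            = ∑ k : Fin F.card, |G (sSup (e.symm k : Set ℝ)) - G (sInf (e.symm k : Set ℝ))| := by
          rw [← Finset.sum_coe_sort F (fun D => |G (sSup (D : Set ℝ)) - G (sInf (D : Set ℝ))|)]
          exact (Equiv.sum_comp e.symm _).symm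
        rw [hsum1]
        apply hδ F.card (fun k => sInf (e.symm k : Set ℝ)) (fun k => sSup (e.symm k : Set ℝ))
        · exact fun k => (hFIoo _ (e.symm k).2).2
        · intro k k' hkk'
          have hne : ((e.symm k : Set ℝ)) ≠ ((e.symm k' : Set ℝ)) := by
            intro hcontra
            exact hkk' (by
              have : e.symm k = e.symm k' := Subtype.coe_injective hcontra
              simpa using congrArg e this)
          have hd := hFdisj (e.symm k).2 (e.symm k').2 hne
          rw [Function.onFun] at hd
          rw [← (hFIoo _ (e.symm k).2).1, ← (hFIoo _ (e.symm k').2).1]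
          exact hd
        · have hsum2 : ∑ k : Fin F.card, (sSup (e.symm k : Set ℝ) - sInf (e.symm k : Set ℝ))
              = ∑ D ∈ F, (sSup D - sInf D) := by
            rw [← Finset.sum_coe_sort F (fun D => sSup (D : Set ℝ) - sInf (D : Set ℝ))]
            exact Equiv.sum_comp e.symm (fun D : {x // x ∈ F} => sSup (D : Set ℝ) - sInf (D : Set ℝ))
          rw [hsum2]
          exact hlensum
      calc μ K ≤ μ (⋃ D ∈ F, D) := measure_mono htcover2
        _ ≤ ∑ D ∈ F, μ D := measure_biUnion_finset_le F id
        _ = ENNReal.ofReal (∑ D ∈ F, (G (sSup D) - G (sInf D))) := by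
            rw [ENNReal.ofReal_sum_of_nonneg (fun D hD => sub_nonneg.2 (hmono (hFIoo D hD).2))]
            refine Finset.sum_congr rfl fun D hD => ?_
            conv_lhs => rw [(hFIoo D hD).1]
            exact SG_measure_Ioo hmono hcont _ _
        _ ≤ ENNReal.ofReal ε := ENNReal.ofReal_le_ofReal hGsum.le
    -- conclude by inner regularity
    by_contra hcon
    push_neg at hcon
    obtain ⟨K, hKU, hKcomp, hKgt⟩ := hUopen.exists_lt_isCompact hcon
    exact absurd (hK K hKcomp hKU) (not_le.2 hKgt)
  refine le_antisymm ?_ zero_le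
  refine ENNReal.le_of_forall_pos_le_add fun ε hε _ => ?_
  rw [zero_add]
  calc μ E ≤ ENNReal.ofReal ε := main ε hε
    _ ≤ (ε : ENNReal) := ENNReal.ofReal_coe_nnreal.le

end ACproof

namespace ACproof

variable {G : ℝ → ℝ}

lemma SG_FTC (hmono : Monotone G) (hcont : Continuous G)
    (hac : (SG hmono hcont).measure ≪ (volume : Measure ℝ)) {x y : ℝ} (hxy : x ≤ y) :
    ∫ t in x..y, ((SG hmono hcont).measure.rnDeriv volume t).toReal = G y - G x := by
  set μ := (SG hmono hcont).measure with hμ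
  rw [intervalIntegral.integral_of_le hxy]
  rw [integral_toReal ((Measure.measurable_rnDeriv μ volume).aemeasurable.restrict)
    (ae_restrict_of_ae (Measure.rnDeriv_lt_top μ volume))]
  rw [Measure.setLIntegral_rnDeriv hac]
  rw [hμ, StieltjesFunction.measure_Ioc]
  show (ENNReal.ofReal (G y - G x)).toReal = G y - G x
  rw [ENNReal.toReal_ofReal (sub_nonneg.2 (hmono hxy))]

lemma SG_integrable (hmono : Monotone G) (hcont : Continuous G) {x y : ℝ} :
    IntegrableOn (fun t => ((SG hmono hcont).measure.rnDeriv volume t).toReal) (Ioc x y) := by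
  set μ := (SG hmono hcont).measure with hμ
  apply integrable_toReal_of_lintegral_ne_top
    ((Measure.measurable_rnDeriv μ volume).aemeasurable.restrict)
  have h1 : ∫⁻ t in Ioc x y, μ.rnDeriv volume t ∂volume ≤ μ (Ioc x y) :=
    Measure.setLIntegral_rnDeriv_le _
  refine ne_top_of_le_ne_top ?_ h1
  rw [hμ, StieltjesFunction.measure_Ioc]
  exact ENNReal.ofReal_ne_top

lemma SG_deriv_ae (hmono : Monotone G) (hcont : Continuous G) :
    ∀ᵐ x, HasDerivAt G (((SG hmono hcont).measure.rnDeriv volume x).toReal) x :=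
  (SG hmono hcont).ae_hasDerivAt

end ACproof

namespace ACproof

lemma mono_hasDeriv_nonneg {g : ℝ → ℝ} (hg : Monotone g) {m x : ℝ}
    (h : HasDerivAt g m x) : 0 ≤ m := by
  have ht := hasDerivAt_iff_tendsto_slope.1 h
  have ht' : Filter.Tendsto (slope g x) (nhdsWithin x (Ioi x)) (nhds m) :=
    ht.mono_left (nhdsWithin_mono x (fun y (hy : x < y) => ne_of_gt hy))
  apply ge_of_tendsto ht'
  filter_upwards [self_mem_nhdsWithin] with y hy
  rw [slope_def_field]
  exact div_nonneg (sub_nonneg.2 (hg (le_of_lt hy))) (sub_nonneg.2 (le_of_lt hy))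

end ACproof

open ACproof

/-- If `f` is absolutely continuous on `[a,b]`, its total variation on `[a,b]` equals
`∫_a^b |f'(x)| dx`. -/
theorem stmt0 (f : ℝ → ℝ) (a b : ℝ) (hab : a ≤ b)
    (hf : AbsolutelyContinuousOnInterval' f a b) :
    eVariationOn f (Set.Icc a b) = ENNReal.ofReal (∫ x in a..b, |deriv f x|) := by
  classical
  have hmemA : a ∈ Icc a b := ⟨le_rfl, hab⟩
  have hmemB : b ∈ Icc a b := ⟨hab, le_rfl⟩
  have hACv := AC_v hab hf
  have hACw := AC_sub hACv hf
  have hVmono : Monotone (fun x => vv f a b (cl a b x)) :=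
    monotone_clamp hab (v_monotoneOn hab hf)
  have hWmono : Monotone (fun x => vv f a b (cl a b x) - f (cl a b x)) :=
    monotone_clamp hab (v_sub_f_monotoneOn hab hf)
  have hMmono : Monotone (fun x => vv f a b (cl a b x) + f (cl a b x)) :=
    monotone_clamp hab (v_add_f_monotoneOn hab hf)
  have hVcont : Continuous (fun x => vv f a b (cl a b x)) :=
    continuous_clamp hab hACv
  have hWcont : Continuous (fun x => vv f a b (cl a b x) - f (cl a b x)) :=
    continuous_clamp hab hACw
  set V : ℝ → ℝ := fun x => vv f a b (cl a b x) with hV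
  set W : ℝ → ℝ := fun x => vv f a b (cl a b x) - f (cl a b x) with hW
  set μ1 := (SG hVmono hVcont).measure with hμ1
  set μ2 := (SG hWmono hWcont).measure with hμ2
  set d1 : ℝ → ℝ := fun x => (μ1.rnDeriv volume x).toReal with hd1
  set d2 : ℝ → ℝ := fun x => (μ2.rnDeriv volume x).toReal with hd2
  have hac1 : μ1 ≪ volume := SG_abs_cont _ _ (ACglobal_of_AC hab hACv)
  have hac2 : μ2 ≪ volume := SG_abs_cont _ _ (ACglobal_of_AC hab hACw)
  have hFTC1 : ∀ x y : ℝ, x ≤ y → ∫ t in x..y, d1 t = V y - V x :=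
    fun x y h => SG_FTC hVmono hVcont hac1 h
  have hFTC2 : ∀ x y : ℝ, x ≤ y → ∫ t in x..y, d2 t = W y - W x :=
    fun x y h => SG_FTC hWmono hWcont hac2 h
  have hd1int : ∀ x y : ℝ, IntegrableOn d1 (Ioc x y) :=
    fun x y => SG_integrable hVmono hVcont
  have hd2int : ∀ x y : ℝ, IntegrableOn d2 (Ioc x y) :=
    fun x y => SG_integrable hWmono hWcont
  -- derivative facts almost everywhere
  have main_ae : ∀ᵐ x : ℝ, x ∈ Ioo a b →
      (HasDerivAt f (d1 x - d2 x) x ∧ |d1 x - d2 x| ≤ d1 x) := by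
    filter_upwards [SG_deriv_ae hVmono hVcont, SG_deriv_ae hWmono hWcont] with x h1 h2 hx
    have hnb : Ioo a b ∈ nhds x := isOpen_Ioo.mem_nhds hx
    have heq : f =ᶠ[nhds x] fun y => V y - W y := by
      filter_upwards [hnb] with y hy
      simp only [hV, hW, sub_sub_cancel]
      rw [cl_eq (Ioo_subset_Icc_self hy)]
    have hfd : HasDerivAt f (d1 x - d2 x) x := (h1.sub h2).congr_of_eventuallyEq heq
    refine ⟨hfd, ?_⟩
    have hd2nn : 0 ≤ d2 x := ENNReal.toReal_nonneg
    have heqM : (fun y => vv f a b (cl a b y) + f (cl a b y))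
        =ᶠ[nhds x] fun y => V y + f y := by
      filter_upwards [hnb] with y hy
      simp only [hV]
      rw [cl_eq (Ioo_subset_Icc_self hy)]
    have hM : HasDerivAt (fun y => vv f a b (cl a b y) + f (cl a b y))
        (d1 x + (d1 x - d2 x)) x :=
      (h1.add hfd).congr_of_eventuallyEq heqM
    have hnn : 0 ≤ d1 x + (d1 x - d2 x) := mono_hasDeriv_nonneg hMmono hM
    rw [abs_le]
    constructor <;> linarith
  have h2full : ∀ᵐ t : ℝ, t ≠ b := by
    rw [ae_iff]
    simp only [ne_eq, not_not, setOf_eq_eq_singleton]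
    exact Real.volume_singleton
  have derivf_ae : ∀ᵐ x : ℝ, x ∈ Ioo a b → deriv f x = d1 x - d2 x := by
    filter_upwards [main_ae] with x h hx
    exact (h hx).1.deriv
  -- endpoint values
  have hVa : V a = 0 := by
    simp only [hV]
    rw [cl_eq hmemA]
    exact variationOnFromTo.self f _ a
  have hVb : V b = vv f a b b := by simp only [hV]; rw [cl_eq hmemB]
  have hfin : eVariationOn f (Icc a b) ≠ ⊤ := bv hab hf
  have hvbeq : vv f a b b = (eVariationOn f (Icc a b)).toReal := by
    have h1 := v_diff hab hf hmemA hmemB hab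
    have h2 : vv f a b a = 0 := variationOnFromTo.self f _ a
    rw [h2, sub_zero] at h1
    exact h1
  -- integrability of |deriv f|
  have hae_Ioc : ∀ x y : ℝ, a ≤ x → y ≤ b →
      (∀ᵐ t ∂(volume.restrict (Ioc x y)), deriv f t = d1 t - d2 t) := by
    intro x y hax hyb
    have h1 : ∀ᵐ t ∂(volume.restrict (Ioc x y)), t ∈ Ioc x y :=
      ae_restrict_mem measurableSet_Ioc
    filter_upwards [h1, ae_restrict_of_ae h2full, ae_restrict_of_ae derivf_ae] with t ht htb hm
    exact hm ⟨hax.trans_lt ht.1, lt_of_le_of_ne (ht.2.trans hyb) htb⟩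
  have habs_int : ∀ x y : ℝ, a ≤ x → y ≤ b →
      IntegrableOn (fun t => |deriv f t|) (Ioc x y) := by
    intro x y hax hyb
    have h0 : IntegrableOn (fun t => |d1 t - d2 t|) (Ioc x y) :=
      ((hd1int x y).sub (hd2int x y)).abs
    exact h0.congr (by
      filter_upwards [hae_Ioc x y hax hyb] with t ht
      rw [ht])
  have hII : ∀ x y : ℝ, x ∈ Icc a b → y ∈ Icc a b →
      IntervalIntegrable (fun t => |deriv f t|) volume x y := by
    intro x y hx hy
    rcases le_total x y with h | h
    · exact (intervalIntegrable_iff_integrableOn_Ioc_of_le h).2 (habs_int x y hx.1 hy.2)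
    · exact ((intervalIntegrable_iff_integrableOn_Ioc_of_le h).2 (habs_int y x hy.1 hx.2)).symm
  -- key estimate on subintervals
  have hkey : ∀ x y : ℝ, x ∈ Icc a b → y ∈ Icc a b → x ≤ y →
      |f y - f x| ≤ ∫ t in x..y, |deriv f t| := by
    intro x y hx hy hxy
    have hint1 : IntervalIntegrable d1 volume x y :=
      (intervalIntegrable_iff_integrableOn_Ioc_of_le hxy).2 (hd1int x y)
    have hint2 : IntervalIntegrable d2 volume x y :=
      (intervalIntegrable_iff_integrableOn_Ioc_of_le hxy).2 (hd2int x y)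
    have e1 : f y - f x = ∫ t in x..y, (d1 t - d2 t) := by
      rw [intervalIntegral.integral_sub hint1 hint2, hFTC1 x y hxy, hFTC2 x y hxy]
      simp only [hV, hW]
      rw [cl_eq hx, cl_eq hy]
      ring
    rw [e1]
    calc |∫ t in x..y, (d1 t - d2 t)| ≤ ∫ t in x..y, |d1 t - d2 t| :=
          intervalIntegral.abs_integral_le_integral_abs hxy
      _ = ∫ t in x..y, |deriv f t| := by
          apply intervalIntegral.integral_congr_ae'
          · filter_upwards [derivf_ae, h2full] with t hm hb ht
            rw [hm ⟨hx.1.trans_lt ht.1, lt_of_le_of_ne (ht.2.trans hy.2) hb⟩]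
          · have : Ioc y x = (∅ : Set ℝ) := Set.Ioc_eq_empty (not_lt.2 hxy)
            filter_upwards with t ht
            rw [this] at ht
            exact absurd ht (Set.notMem_empty t)
  -- upper bound
  have hup : eVariationOn f (Icc a b) ≤ ENNReal.ofReal (∫ t in a..b, |deriv f t|) := by
    apply iSup_le
    rintro ⟨n, u, hu, us⟩
    rw [edist_sum_eq]
    apply ENNReal.ofReal_le_ofReal
    have tele : ∀ m : ℕ, ∑ i ∈ Finset.range m, |f (u (i+1)) - f (u i)|
        ≤ ∫ t in (u 0)..(u m), |deriv f t| := by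
      intro m
      induction m with
      | zero => simp
      | succ m ih =>
        rw [Finset.sum_range_succ]
        have hadj : ∫ t in (u 0)..(u (m+1)), |deriv f t|
            = (∫ t in (u 0)..(u m), |deriv f t|) + ∫ t in (u m)..(u (m+1)), |deriv f t| :=
          (intervalIntegral.integral_add_adjacent_intervals
            (hII _ _ (us 0) (us m)) (hII _ _ (us m) (us (m+1)))).symm
        rw [hadj]
        exact add_le_add ih (hkey _ _ (us m) (us (m+1)) (hu (Nat.le_succ m)))
    calc ∑ i ∈ Finset.range n, |f (u (i+1)) - f (u i)|
        ≤ ∫ t in (u 0)..(u n), |deriv f t| := tele n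
      _ ≤ ∫ t in a..b, |deriv f t| := by
          apply intervalIntegral.integral_mono_interval (us 0).1 (hu (Nat.zero_le n)) (us n).2
          · exact ae_of_all _ fun t => abs_nonneg _
          · exact hII a b hmemA hmemB
  -- lower bound
  have habs_le_d1 : ∀ᵐ t ∂(volume.restrict (Icc a b)), |deriv f t| ≤ d1 t := by
    have h1 : ∀ᵐ t ∂(volume.restrict (Icc a b)), t ∈ Icc a b :=
      ae_restrict_mem measurableSet_Icc
    have h3full : ∀ᵐ t : ℝ, t ≠ a := by
      rw [ae_iff]
      simp only [ne_eq, not_not, setOf_eq_eq_singleton]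
      exact Real.volume_singleton
    filter_upwards [h1, ae_restrict_of_ae h2full, ae_restrict_of_ae h3full,
      ae_restrict_of_ae main_ae] with t ht htb hta hm
    have htIoo : t ∈ Ioo a b := ⟨lt_of_le_of_ne ht.1 (Ne.symm hta), lt_of_le_of_ne ht.2 htb⟩
    have := (hm htIoo).2
    rw [(hm htIoo).1.deriv]
    exact this
  have hlow : ∫ t in a..b, |deriv f t| ≤ (eVariationOn f (Icc a b)).toReal := by
    calc ∫ t in a..b, |deriv f t| ≤ ∫ t in a..b, d1 t :=
          intervalIntegral.integral_mono_ae_restrict hab (hII a b hmemA hmemB)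
            ((intervalIntegrable_iff_integrableOn_Ioc_of_le hab).2 (hd1int a b)) habs_le_d1
      _ = V b - V a := hFTC1 a b hab
      _ = (eVariationOn f (Icc a b)).toReal := by rw [hVa, hVb, sub_zero, hvbeq]
  refine le_antisymm hup ?_
  calc ENNReal.ofReal (∫ x in a..b, |deriv f x|)
      ≤ ENNReal.ofReal ((eVariationOn f (Icc a b)).toReal) := ENNReal.ofReal_le_ofReal hlow
    _ = eVariationOn f (Icc a b) := ENNReal.ofReal_toReal hfin
end

section
/- Let f : [−π, π] → ℝ have bounded total variation TV(f). Then for every nonzero integer k, the Fourier coefficient f̂ₖ = (1/(2π)) ∫_{−π}^{π} f(x) e^{−ikx} dx satisfies |f̂ₖ| ≤ (2/(|k|π))·TV(f). -/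
open Set Real MeasureTheory intervalIntegral Filter Function

lemma key_mono (g : ℝ → ℝ) (hg : Monotone g) (hgt : ∀ x, π ≤ x → g x = g π)
    (k : ℤ) (hk : k ≠ 0) :
    ‖∫ x in (-π)..π, (g x : ℂ) * Complex.exp (-Complex.I * ↑k * ↑x)‖
      ≤ 2 / |(k : ℝ)| * (g π - g (-π)) := by
  have hππ : (-π : ℝ) ≤ π := by linarith [Real.pi_pos]
  have hkpos : (0:ℝ) < |(k:ℝ)| := by
    simpa using abs_pos.2 (by exact_mod_cast hk : ((k:ℝ) ≠ 0))
  set c : ℂ := -Complex.I * k with hc_def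
  have hc : c ≠ 0 :=
    mul_ne_zero (neg_ne_zero.2 Complex.I_ne_zero) (Int.cast_ne_zero.2 hk)
  have hnc : ‖c‖ = |(k:ℝ)| := by rw [hc_def, norm_mul]; simp
  have norm_e : ∀ x : ℝ, ‖Complex.exp (c * x)‖ = 1 := by
    intro x
    rw [Complex.norm_exp]
    simp [hc_def, Complex.exp_re]
  -- bound on partial antiderivative
  have E_bound : ∀ t : ℝ, ‖∫ x in t..π, Complex.exp (c * x)‖ ≤ 2 / |(k:ℝ)| := by
    intro t
    rw [integral_exp_mul_complex hc, norm_div, hnc]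
    have : ‖Complex.exp (c * (π:ℝ)) - Complex.exp (c * t)‖ ≤ 2 := by
      calc ‖Complex.exp (c * (π:ℝ)) - Complex.exp (c * t)‖
          ≤ ‖Complex.exp (c * (π:ℝ))‖ + ‖Complex.exp (c * t)‖ := norm_sub_le _ _
        _ = 2 := by rw [norm_e, norm_e]; norm_num
    exact div_le_div_of_nonneg_right this hkpos.le
  -- full-period integral vanishes
  have zero_int : (∫ x in (-π)..π, Complex.exp (c * x)) = 0 := by
    rw [integral_exp_mul_complex hc]
    have : c * ((-π : ℝ) : ℂ) = c * (π:ℝ) + k * (2 * π * Complex.I) := by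
      rw [hc_def]; push_cast; ring
    rw [this, Complex.exp_add, Complex.exp_int_mul_two_pi_mul_I, mul_one, sub_self, zero_div]
  -- Stieltjes measure of the monotone function
  set S := hg.stieltjesFunction with hS_def
  set μ := S.measure with hμ_def
  have hSg : ∀ᵐ x ∂(volume : Measure ℝ), S x = g x := by
    have hcnt := hg.countable_not_continuousAt
    filter_upwards [measure_eq_zero_iff_ae_notMem.1 (hcnt.measure_zero (volume : Measure ℝ))] with x hx
    rw [hS_def, hg.stieltjesFunction_eq]
    exact hg.continuousWithinAt_Ioi_iff_rightLim_eq.1 (not_not.1 hx).continuousWithinAt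
  have hSπ : S π = g π := by
    rw [hS_def, hg.stieltjesFunction_eq]
    apply rightLim_eq_of_tendsto
    apply Tendsto.congr' ?_ tendsto_const_nhds
    filter_upwards [self_mem_nhdsWithin] with x hx
    exact (hgt x (le_of_lt hx)).symm
  have hSa : g (-π) ≤ S (-π) := by
    rw [hS_def, hg.stieltjesFunction_eq]
    exact hg.le_rightLim le_rfl
  set lam : Measure ℝ := volume.restrict (Ioc (-π) π) with hlam_def
  set ν : Measure ℝ := μ.restrict (Ioc (-π) π) with hν_def
  have hμIoc : μ (Ioc (-π) π) = ENNReal.ofReal (S π - S (-π)) := S.measure_Ioc _ _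
  haveI : IsFiniteMeasure ν := by
    constructor
    rw [hν_def, Measure.restrict_apply_univ, hμIoc]
    exact ENNReal.ofReal_lt_top
  haveI : IsFiniteMeasure lam := by
    constructor
    rw [hlam_def, Measure.restrict_apply_univ]
    exact measure_Ioc_lt_top
  -- the two-variable kernel
  set F : ℝ → ℝ → ℂ := fun x t => (Ioc (-π) x).indicator (fun _ => Complex.exp (c * x)) t
    with hF_def
  have hFunc : uncurry F = ({q : ℝ × ℝ | q.2 ∈ Ioc (-π) q.1}).indicator
      (fun q => Complex.exp (c * q.1)) := by
    funext q
    rcases q with ⟨x, t⟩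
    show (Ioc (-π) x).indicator (fun _ => Complex.exp (c * x)) t = _
    by_cases h : t ∈ Ioc (-π) x
    · rw [Set.indicator_of_mem h, Set.indicator_of_mem]
      exact h
    · rw [Set.indicator_of_notMem h, Set.indicator_of_notMem]
      exact h
  have hAmeas : MeasurableSet {q : ℝ × ℝ | q.2 ∈ Ioc (-π) q.1} := by
    apply MeasurableSet.inter
    · exact measurableSet_lt measurable_const measurable_snd
    · exact measurableSet_le measurable_snd measurable_fst
  have hF_int : Integrable (uncurry F) (lam.prod ν) := by
    constructor
    · rw [hFunc]
      exact (((Complex.continuous_exp.comp (continuous_const.mul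
        (Complex.continuous_ofReal.comp continuous_fst))).stronglyMeasurable).indicator
        hAmeas).aestronglyMeasurable
    · apply HasFiniteIntegral.mono' (g := fun _ => (1:ℝ)) (hasFiniteIntegral_const 1)
      apply ae_of_all
      rintro ⟨x, t⟩
      calc ‖uncurry F (x, t)‖ ≤ ‖Complex.exp (c * x)‖ := by
            rw [hFunc]; exact norm_indicator_le_norm_self _ _
        _ = 1 := norm_e x
  -- pointwise representation of the integrand
  have key_repr : ∀ᵐ x ∂lam, (g x : ℂ) * Complex.exp (c * x)
      = (S (-π) : ℝ) • Complex.exp (c * x) + ∫ t, F x t ∂ν := by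
    rw [hlam_def]
    filter_upwards [ae_restrict_mem measurableSet_Ioc, ae_restrict_of_ae hSg] with x hx hSx
    have hFi : ∫ t, F x t ∂ν = (ν (Ioc (-π) x)).toReal • Complex.exp (c * x) := by
      rw [hF_def]
      exact integral_indicator_const _ measurableSet_Ioc
    have hνx : ν (Ioc (-π) x) = μ (Ioc (-π) x) := by
      rw [hν_def, Measure.restrict_apply measurableSet_Ioc,
        inter_eq_self_of_subset_left (Ioc_subset_Ioc_right hx.2)]
    rw [hFi, hνx, S.measure_Ioc, ENNReal.toReal_ofReal (sub_nonneg.2 (S.mono hx.1.le)),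
      ← hSx]
    push_cast [Complex.real_smul]
    ring
  -- integrability of the two pieces
  have i1 : Integrable (fun x : ℝ => (S (-π) : ℝ) • Complex.exp (c * x)) lam := by
    rw [hlam_def]
    exact Continuous.integrableOn_Ioc (by fun_prop)
  have i2 : Integrable (fun x => ∫ t, F x t ∂ν) lam := hF_int.integral_prod_left
  -- main computation
  have main_eq : (∫ x in (-π)..π, (g x : ℂ) * Complex.exp (c * x))
      = ∫ t, (∫ x, F x t ∂lam) ∂ν := by
    rw [integral_of_le hππ, ← hlam_def, integral_congr_ae key_repr, integral_add i1 i2,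
      MeasureTheory.integral_smul, ← integral_integral_swap hF_int]
    have : ∫ x, Complex.exp (c * x) ∂lam = 0 := by
      rw [hlam_def, ← integral_of_le hππ, zero_int]
    rw [this, smul_zero, zero_add]
  -- bound the inner integral
  have inner_bound : ∀ᵐ t ∂ν, ‖∫ x, F x t ∂lam‖ ≤ 2 / |(k:ℝ)| := by
    rw [hν_def]
    filter_upwards [ae_restrict_mem measurableSet_Ioc] with t ht
    have hft : (fun x => F x t) = (Ici t).indicator (fun x : ℝ => Complex.exp (c * x)) := by
      funext x
      show (Ioc (-π) x).indicator (fun _ => Complex.exp (c * x)) t = _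
      by_cases h : t ≤ x
      · rw [Set.indicator_of_mem (mem_Ioc.2 ⟨ht.1, h⟩), Set.indicator_of_mem (mem_Ici.2 h)]
      · rw [Set.indicator_of_notMem (by simp [mem_Ioc, h]),
          Set.indicator_of_notMem (by simpa [mem_Ici] using h)]
    have hset : Ici t ∩ Ioc (-π) π = Icc t π := by
      ext x
      simp only [mem_inter_iff, mem_Ici, mem_Ioc, mem_Icc]
      constructor
      · rintro ⟨h1, _, h3⟩; exact ⟨h1, h3⟩
      · rintro ⟨h1, h2⟩; exact ⟨h1, lt_of_lt_of_le ht.1 h1, h2⟩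
    rw [hft, MeasureTheory.integral_indicator measurableSet_Ici, hlam_def,
      Measure.restrict_restrict measurableSet_Ici, hset, integral_Icc_eq_integral_Ioc,
      ← intervalIntegral.integral_of_le ht.2]
    exact E_bound t
  have hν_univ : (ν univ).toReal = S π - S (-π) := by
    rw [hν_def, Measure.restrict_apply_univ, hμIoc,
      ENNReal.toReal_ofReal (sub_nonneg.2 (S.mono hππ))]
  rw [main_eq]
  calc ‖∫ t, (∫ x, F x t ∂lam) ∂ν‖ ≤ ∫ _t, 2 / |(k:ℝ)| ∂ν :=
        norm_integral_le_of_norm_le (integrable_const _) inner_bound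
    _ = (S π - S (-π)) * (2 / |(k:ℝ)|) := by
        rw [MeasureTheory.integral_const, smul_eq_mul, measureReal_def, hν_univ]
    _ ≤ (g π - g (-π)) * (2 / |(k:ℝ)|) := by
        apply mul_le_mul_of_nonneg_right _ (by positivity)
        have := hgt π le_rfl
        linarith [hSa, hSπ.ge, hSπ.le]
    _ = 2 / |(k:ℝ)| * (g π - g (-π)) := mul_comm _ _

lemma dist_le_varFromTo (f : ℝ → ℝ) {s : Set ℝ} (hlbv : LocallyBoundedVariationOn f s)
    {b c : ℝ} (hb : b ∈ s) (hc : c ∈ s) (hbc : b ≤ c) :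
    dist (f b) (f c) ≤ variationOnFromTo f s b c := by
  rw [variationOnFromTo.eq_of_le f s hbc, dist_edist]
  apply ENNReal.toReal_mono (hlbv b c hb hc)
  apply eVariationOn.edist_le f
  exacts [⟨hb, le_rfl, hbc⟩, ⟨hc, hbc, le_rfl⟩]

/-- If `f : [-π,π] → ℝ` has bounded total variation, then for every nonzero integer `k`,
the Fourier coefficient `f̂ₖ = (1/(2π)) ∫_{-π}^{π} f(x) e^{-ikx} dx` satisfies
`|f̂ₖ| ≤ (2/(|k|π))·TV(f)`. -/
theorem stmt7 (f : ℝ → ℝ) (hf : BoundedVariationOn f (Set.Icc (-π) π))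
    (k : ℤ) (hk : k ≠ 0) :
    ‖(1 / (2 * (π:ℂ))) * ∫ x in (-π)..π, (f x : ℂ) * Complex.exp (-Complex.I * k * x)‖
      ≤ 2 / (|(k:ℝ)| * π) * (eVariationOn f (Set.Icc (-π) π)).toReal := by
  have hππ : (-π : ℝ) ≤ π := by linarith [Real.pi_pos]
  have hkpos : (0:ℝ) < |(k:ℝ)| := by
    simpa using abs_pos.2 (by exact_mod_cast hk : ((k:ℝ) ≠ 0))
  set s : Set ℝ := Set.Icc (-π) π with hs_def
  have hlbv : LocallyBoundedVariationOn f s := hf.locallyBoundedVariationOn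
  -- clamping to the interval
  set cl : ℝ → ℝ := fun x => max (-π) (min x π) with hcl_def
  have hcl_mono : Monotone cl := fun x y hxy =>
    max_le_max le_rfl (min_le_min_right _ hxy)
  have hcl_mem : ∀ x, cl x ∈ s := fun x =>
    ⟨le_max_left _ _, max_le hππ (min_le_right _ _)⟩
  have hcl_id : ∀ x ∈ s, cl x = x := fun x hx => by
    rw [hcl_def]
    simp only [min_eq_left hx.2, max_eq_right hx.1]
  have hcl_top : ∀ x, π ≤ x → cl x = π := fun x hx => by
    rw [hcl_def]; simp only [min_eq_right hx, max_eq_right hππ]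
  have hcl_a : cl (-π) = -π := hcl_id _ ⟨le_rfl, hππ⟩
  have hcl_b : cl π = π := hcl_id _ ⟨hππ, le_rfl⟩
  -- monotone decomposition
  set v : ℝ → ℝ := fun x => variationOnFromTo f s (-π) (cl x) with hv_def
  set p : ℝ → ℝ := fun x => (v x + f (cl x)) / 2 with hp_def
  set n : ℝ → ℝ := fun x => (v x - f (cl x)) / 2 with hn_def
  have hvar : ∀ x y : ℝ, x ≤ y → v y - v x = variationOnFromTo f s (cl x) (cl y) := by
    intro x y hxy
    rw [hv_def]
    simp only
    rw [← variationOnFromTo.add hlbv (⟨le_rfl, hππ⟩ : (-π:ℝ) ∈ s) (hcl_mem x) (hcl_mem y)]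
    ring
  have hp_mono : Monotone p := by
    intro x y hxy
    have h1 := dist_le_varFromTo f hlbv (hcl_mem x) (hcl_mem y) (hcl_mono hxy)
    rw [Real.dist_eq] at h1
    have h2 := hvar x y hxy
    have := abs_le.1 h1
    rw [hp_def]
    simp only
    linarith [this.1]
  have hn_mono : Monotone n := by
    intro x y hxy
    have h1 := dist_le_varFromTo f hlbv (hcl_mem x) (hcl_mem y) (hcl_mono hxy)
    rw [Real.dist_eq] at h1
    have h2 := hvar x y hxy
    have := abs_le.1 h1
    rw [hn_def]
    simp only
    linarith [this.2]
  have hv_top : ∀ x, π ≤ x → v x = v π := fun x hx => by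
    rw [hv_def]; simp only [hcl_top x hx, hcl_b]
  have hp_top : ∀ x, π ≤ x → p x = p π := fun x hx => by
    rw [hp_def]; simp only [hcl_top x hx, hcl_b, hv_top x hx]
  have hn_top : ∀ x, π ≤ x → n x = n π := fun x hx => by
    rw [hn_def]; simp only [hcl_top x hx, hcl_b, hv_top x hx]
  have hv_a : v (-π) = 0 := by
    rw [hv_def]; simp only [hcl_a]; exact variationOnFromTo.self f s (-π)
  have hv_b : v π = (eVariationOn f s).toReal := by
    rw [hv_def]
    simp only [hcl_b]
    rw [variationOnFromTo.eq_of_le f s hππ, hs_def, Set.inter_eq_self_of_subset_left]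
    exact fun x hx => hx
  -- total bound
  have hsum : (p π - p (-π)) + (n π - n (-π)) = (eVariationOn f s).toReal := by
    rw [hp_def, hn_def]
    simp only [hcl_a, hcl_b]
    rw [← hv_b]
    have : v (-π) = 0 := hv_a
    linarith [this]
  have hdecomp : ∀ x ∈ Set.uIcc (-π) π, (f x : ℂ) * Complex.exp (-Complex.I * k * x)
      = (p x : ℂ) * Complex.exp (-Complex.I * k * x)
        - (n x : ℂ) * Complex.exp (-Complex.I * k * x) := by
    intro x hx
    rw [Set.uIcc_of_le hππ] at hx
    have : (p x : ℂ) - n x = f x := by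
      rw [hp_def, hn_def]
      push_cast
      rw [hcl_id x hx]
      ring
    rw [← sub_mul, this]
  have hint : ∀ g : ℝ → ℝ, Monotone g →
      IntervalIntegrable (fun x => (g x : ℂ) * Complex.exp (-Complex.I * k * x))
        volume (-π) π := by
    intro g hg
    have h1 : IntervalIntegrable g volume (-π) π := hg.intervalIntegrable
    rw [intervalIntegrable_iff] at h1 ⊢
    have h2 : IntegrableOn (fun x => (g x : ℂ)) (Set.uIoc (-π) π) volume := h1.ofReal
    have h3 := h2.bdd_mul
      ((Complex.continuous_exp.comp ((continuous_const (y := (-Complex.I * k : ℂ))).mul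
        Complex.continuous_ofReal)).aestronglyMeasurable)
      (c := 1) (ae_of_all _ fun x => by
        rw [Function.comp]
        show ‖Complex.exp (-Complex.I * k * x)‖ ≤ 1
        rw [Complex.norm_exp]
        simp [Complex.exp_re])
    have h4 : (fun x : ℝ => Complex.exp (-Complex.I * k * x) * (g x : ℂ))
        = fun x : ℝ => (g x : ℂ) * Complex.exp (-Complex.I * k * x) := by
      funext x; ring
    rw [← h4]
    exact h3
  -- split the integral
  rw [intervalIntegral.integral_congr hdecomp,
    intervalIntegral.integral_sub (hint p hp_mono) (hint n hn_mono)]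
  have hp_bd := key_mono p hp_mono hp_top k hk
  have hn_bd := key_mono n hn_mono hn_top k hk
  have hV : (0:ℝ) ≤ (eVariationOn f s).toReal := ENNReal.toReal_nonneg
  have hπ := Real.pi_pos
  have hnorm_c : ‖(1 / (2 * (π:ℂ)))‖ = 1 / (2 * π) := by
    rw [norm_div, norm_one, norm_mul]
    simp [abs_of_pos hπ]
  rw [norm_mul, hnorm_c]
  calc (1 / (2*π)) * ‖(∫ x in (-π)..π, (p x : ℂ) * Complex.exp (-Complex.I * k * x))
          - ∫ x in (-π)..π, (n x : ℂ) * Complex.exp (-Complex.I * k * x)‖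
      ≤ (1 / (2*π)) * (2 / |(k:ℝ)| * (p π - p (-π)) + 2 / |(k:ℝ)| * (n π - n (-π))) := by
        apply mul_le_mul_of_nonneg_left _ (by positivity)
        exact (norm_sub_le _ _).trans (add_le_add hp_bd hn_bd)
    _ = (1 / (2*π)) * (2 / |(k:ℝ)| * (eVariationOn f s).toReal) := by
        rw [← hsum]; ring
    _ ≤ 2 / (|(k:ℝ)| * π) * (eVariationOn f s).toReal := by
        rw [show (1 / (2*π)) * (2 / |(k:ℝ)| * (eVariationOn f s).toReal)
            = (1 / (|(k:ℝ)| * π)) * (eVariationOn f s).toReal by field_simp]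
        apply mul_le_mul_of_nonneg_right _ hV
        exact div_le_div_of_nonneg_right one_le_two (by positivity) |>.trans_eq rfl
end
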